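/- arXiv:2010.13284 — 2 statements merged into one kernel-verified Lean document; each statement's English description precedes it below -/
import Mathlib

section
/- Let g be the 3-dimensional complex Lie algebra with basis e_1, e_2, e_3 and Lie bracket determined by [e_1,e_2] = e_2, [e_1,e_3] = e_3, [e_2,e_3] = 0. Then ind g = 1, but g is not contact: there is no φ ∈ g* with φ ∧ dφ ≠ 0. -/
open scoped TensorProduct

noncomputable section

namespace ContactSeaweeds

/-! ### Index of a Lie algebra -/

/-- The kernel of the Kirillov form `B_φ(x, y) = φ ⁅x, y⁆` associated to a one-form `φ`. -/
def kirillovKernel {L : Type*} [LieRing L] [LieAlgebra ℂ L] (φ : Module.Dual ℂ L) :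
    Submodule ℂ L where
  carrier := {x | ∀ y, φ ⁅x, y⁆ = 0}
  add_mem' := by
    intro x y hx hy z
    simp [add_lie, hx z, hy z]
  zero_mem' := by intro y; simp
  smul_mem' := by
    intro c x hx y
    simp [smul_lie, hx y]

/-- The index of a complex Lie algebra:
`ind L = min_{φ ∈ L*} dim {x ∈ L | φ ⁅x, y⁆ = 0 for all y ∈ L}`. -/
def lieIndex (L : Type*) [LieRing L] [LieAlgebra ℂ L] : ℕ :=
  sInf {d : ℕ | ∃ φ : Module.Dual ℂ L, d = Module.finrank ℂ (kirillovKernel φ)}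

/-! ### Contact structures -/

/-- Wedge product of complex-valued alternating forms. -/
def wedge {L : Type*} [AddCommGroup L] [Module ℂ L] {p q : ℕ}
    (α : L [⋀^Fin p]→ₗ[ℂ] ℂ) (β : L [⋀^Fin q]→ₗ[ℂ] ℂ) : L [⋀^Fin (p + q)]→ₗ[ℂ] ℂ :=
  ((TensorProduct.lid ℂ ℂ).toLinearMap.compAlternatingMap (α.domCoprod β)).domDomCongr
    finSumFinEquiv

/-- `k`-th wedge power of a two-form. -/
def wedgePow {L : Type*} [AddCommGroup L] [Module ℂ L] (β : L [⋀^Fin 2]→ₗ[ℂ] ℂ) :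
    (k : ℕ) → L [⋀^Fin (2 * k)]→ₗ[ℂ] ℂ
  | 0 => (AlternatingMap.constOfIsEmpty ℂ L (Fin 0) 1).domDomCongr (finCongr (by ring))
  | k + 1 => (wedge β (wedgePow β k)).domDomCongr (finCongr (by ring))

/-- The alternating two-form `dφ (x, y) = -φ ⁅x, y⁆`. -/
def dForm {L : Type*} [LieRing L] [LieAlgebra ℂ L] (φ : Module.Dual ℂ L) :
    L [⋀^Fin 2]→ₗ[ℂ] ℂ where
  toFun v := -φ ⁅v 0, v 1⁆
  map_update_add' := by
    intro _ v i x y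
    fin_cases i <;>
      simp [Function.update_apply, Fin.ext_iff, add_lie, lie_add] <;> ring
  map_update_smul' := by
    intro _ v i c x
    fin_cases i <;>
      simp [Function.update_apply, Fin.ext_iff, smul_lie, lie_smul]
  map_eq_zero_of_eq' := by
    intro v i j hv hij
    have : i = 0 ∧ j = 1 ∨ i = 1 ∧ j = 0 := by omega
    rcases this with ⟨hi, hj⟩ | ⟨hi, hj⟩ <;> subst hi <;> subst hj <;>
      · show -φ ⁅v 0, v 1⁆ = 0
        rw [hv]
        simp

/-- The `(1 + 2n)`-form `φ ∧ (dφ)^n`. -/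
def contactCandidate {L : Type*} [LieRing L] [LieAlgebra ℂ L] (n : ℕ)
    (φ : Module.Dual ℂ L) : L [⋀^Fin (1 + 2 * n)]→ₗ[ℂ] ℂ :=
  wedge (AlternatingMap.ofSubsingleton ℂ L ℂ (0 : Fin 1) φ) (wedgePow (dForm φ) n)

/-- `φ` is a contact form: `φ ∧ (dφ)^n ≠ 0` (for a Lie algebra of dimension `2n + 1`). -/
def IsContactForm {L : Type*} [LieRing L] [LieAlgebra ℂ L] (n : ℕ)
    (φ : Module.Dual ℂ L) : Prop :=
  contactCandidate n φ ≠ 0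

/-- A complex Lie algebra is contact if it has (odd) dimension `2n + 1` and admits a one-form
`φ` with `φ ∧ (dφ)^n ≠ 0`. -/
def IsContact (L : Type*) [LieRing L] [LieAlgebra ℂ L] : Prop :=
  ∃ n : ℕ, Module.finrank ℂ L = 2 * n + 1 ∧ ∃ φ : Module.Dual ℂ L, IsContactForm n φ

/-! ### Seaweed algebras -/

/-- `c` is a composition of `n`: a list of positive integers summing to `n`. -/
def IsComposition (n : ℕ) (c : List ℕ) : Prop :=
  (∀ x ∈ c, 0 < x) ∧ c.sum = n

/-- `i` and `j` (0-based) lie in the same block of the composition `c`. -/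
def SameBlock (c : List ℕ) (i j : ℕ) : Prop :=
  ∃ k : ℕ, (c.take k).sum ≤ i ∧ i < (c.take (k + 1)).sum ∧
    (c.take k).sum ≤ j ∧ j < (c.take (k + 1)).sum

/-- The `(i, j)` location (0-based) is admissible for the seaweed determined by the
compositions `a` (lower-triangular blocks) and `b` (upper-triangular blocks). -/
def Admissible (a b : List ℕ) (i j : ℕ) : Prop :=
  (j ≤ i ∧ SameBlock a i j) ∨ (i ≤ j ∧ SameBlock b i j)

lemma take_sum_mono (c : List ℕ) {m m' : ℕ} (h : m ≤ m') :
    (c.take m).sum ≤ (c.take m').sum := by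
  obtain ⟨d, rfl⟩ := Nat.exists_eq_add_of_le h
  rw [List.take_add, List.sum_append]
  omega

lemma sameBlock_symm {c : List ℕ} {i j : ℕ} (h : SameBlock c i j) : SameBlock c j i := by
  obtain ⟨k, h1, h2, h3, h4⟩ := h
  exact ⟨k, h3, h4, h1, h2⟩

lemma sameBlock_trans {c : List ℕ} {i j k : ℕ} (h1 : SameBlock c i k) (h2 : SameBlock c k j) :
    SameBlock c i j := by
  obtain ⟨k1, a1, a2, a3, a4⟩ := h1
  obtain ⟨k2, b1, b2, b3, b4⟩ := h2
  have hk : k1 = k2 := by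
    rcases Nat.lt_trichotomy k1 k2 with h | h | h
    · have := take_sum_mono c (show k1 + 1 ≤ k2 from h)
      omega
    · exact h
    · have := take_sum_mono c (show k2 + 1 ≤ k1 from h)
      omega
  subst hk
  exact ⟨k1, a1, a2, b3, b4⟩

lemma sameBlock_between {c : List ℕ} {i j z : ℕ} (h : SameBlock c i j)
    (h1 : i ≤ z ∨ j ≤ z) (h2 : z ≤ i ∨ z ≤ j) : SameBlock c i z := by
  obtain ⟨k, a1, a2, a3, a4⟩ := h
  exact ⟨k, a1, a2, by omega, by omega⟩

lemma admissible_trans {a b : List ℕ} {i j k : ℕ} (h1 : Admissible a b i k)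
    (h2 : Admissible a b k j) : Admissible a b i j := by
  rcases h1 with ⟨hik, hsb1⟩ | ⟨hik, hsb1⟩ <;> rcases h2 with ⟨hkj, hsb2⟩ | ⟨hkj, hsb2⟩
  · exact Or.inl ⟨le_trans hkj hik, sameBlock_trans hsb1 hsb2⟩
  · rcases le_or_gt j i with hji | hij
    · exact Or.inl ⟨hji, sameBlock_between hsb1 (by omega) (by omega)⟩
    · exact Or.inr ⟨le_of_lt hij, sameBlock_trans
        (sameBlock_symm (sameBlock_between hsb2 (by omega) (by omega))) hsb2⟩
  · rcases le_or_gt j i with hji | hij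
    · exact Or.inl ⟨hji, sameBlock_trans
        (sameBlock_symm (sameBlock_between hsb2 (by omega) (by omega))) hsb2⟩
    · exact Or.inr ⟨le_of_lt hij, sameBlock_between hsb1 (by omega) (by omega)⟩
  · exact Or.inr ⟨le_trans hik hkj, sameBlock_trans hsb1 hsb2⟩

attribute [local instance 100] LieRing.ofAssociativeRing

/-- The type-A seaweed `pₙᴬ(a₁|⋯|aₘ \ b₁|⋯|b_t)`: the Lie algebra of traceless `n × n`
complex matrices supported on admissible locations. -/
def seaweed (n : ℕ) (a b : List ℕ) : LieSubalgebra ℂ (Matrix (Fin n) (Fin n) ℂ) where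
  carrier := {M | Matrix.trace M = 0 ∧
    ∀ i j : Fin n, ¬ Admissible a b i.val j.val → M i j = 0}
  add_mem' := by
    rintro M N ⟨hM1, hM2⟩ ⟨hN1, hN2⟩
    refine ⟨by simp [Matrix.trace_add, hM1, hN1], fun i j h => ?_⟩
    simp [Matrix.add_apply, hM2 i j h, hN2 i j h]
  zero_mem' := by simp
  smul_mem' := by
    rintro c M ⟨hM1, hM2⟩
    refine ⟨by simp [Matrix.trace_smul, hM1], fun i j h => ?_⟩
    simp [Matrix.smul_apply, hM2 i j h]
  lie_mem' := by
    rintro M N ⟨hM1, hM2⟩ ⟨hN1, hN2⟩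
    rw [Ring.lie_def]
    constructor
    · rw [Matrix.trace_sub, Matrix.trace_mul_comm, sub_self]
    · intro i j h
      rw [Matrix.sub_apply, Matrix.mul_apply, Matrix.mul_apply]
      have hz : ∀ k : Fin n, M i k * N k j = 0 ∧ N i k * M k j = 0 := by
        intro k
        constructor
        · by_cases hik : Admissible a b i.val k.val
          · rw [hN2 k j (fun hkj => h (admissible_trans hik hkj)), mul_zero]
          · rw [hM2 i k hik, zero_mul]
        · by_cases hik : Admissible a b i.val k.val
          · rw [hM2 k j (fun hkj => h (admissible_trans hik hkj)), mul_zero]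
          · rw [hN2 i k hik, zero_mul]
      rw [Finset.sum_congr rfl (fun k _ => (hz k).1), Finset.sum_congr rfl (fun k _ => (hz k).2)]
      simp

/-! ### Meanders -/

/-- `{i, j}` (0-based, with `i < j`) is a top edge of the meander of the composition `a`. -/
def TopEdge (a : List ℕ) (i j : ℕ) : Prop :=
  ∃ k r : ℕ, 2 * r + 1 < a.getD k 0 ∧
    i = (a.take k).sum + r ∧ j = (a.take k).sum + (a.getD k 0 - 1 - r)

/-- `{i, j}` (0-based, with `i < j`) is a bottom edge of the meander of the composition `b`. -/
def BottomEdge (b : List ℕ) (i j : ℕ) : Prop :=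
  ∃ k r : ℕ, 2 * r + 1 < b.getD k 0 ∧
    i = (b.take k).sum + r ∧ j = (b.take k).sum + (b.getD k 0 - 1 - r)

/-- The meander of the seaweed with compositions `a` and `b`, as a graph on the `n` vertices:
two vertices are adjacent when they are joined by a top edge or a bottom edge. -/
def meander (n : ℕ) (a b : List ℕ) : SimpleGraph (Fin n) where
  Adj i j := i ≠ j ∧ (TopEdge a i.val j.val ∨ TopEdge a j.val i.val ∨
    BottomEdge b i.val j.val ∨ BottomEdge b j.val i.val)
  symm := ⟨by
    rintro i j ⟨h1, h2⟩
    exact ⟨h1.symm, by tauto⟩⟩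
  loopless := ⟨fun i h => h.1 rfl⟩

/-- The vertex `v` (0-based) lies on exactly one top edge of the meander. -/
def OneTop (a : List ℕ) (v : ℕ) : Prop :=
  ∃! w : ℕ, TopEdge a v w ∨ TopEdge a w v

/-- The vertex `v` (0-based) lies on exactly one bottom edge of the meander. -/
def OneBottom (b : List ℕ) (v : ℕ) : Prop :=
  ∃! w : ℕ, BottomEdge b v w ∨ BottomEdge b w v

/-- A connected component of the meander is a cycle: each of its vertices lies on exactly one
top edge and exactly one bottom edge. -/
def IsCycleComp {n : ℕ} {a b : List ℕ} (c : (meander n a b).ConnectedComponent) : Prop :=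
  ∀ v : Fin n, (meander n a b).connectedComponentMk v = c → OneTop a v.val ∧ OneBottom b v.val

/-- A connected component of the meander is a path (possibly a single vertex): it has a vertex
missing a top edge or a bottom edge. -/
def IsPathComp {n : ℕ} {a b : List ℕ} (c : (meander n a b).ConnectedComponent) : Prop :=
  ∃ v : Fin n, (meander n a b).connectedComponentMk v = c ∧
    ¬ (OneTop a v.val ∧ OneBottom b v.val)

/-! ### Distinguished linear functionals on matrices -/

/-- The linear functional `M ↦ M i j` on matrices. -/
def entryForm {n : ℕ} (i j : Fin n) : Matrix (Fin n) (Fin n) ℂ →ₗ[ℂ] ℂ :=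
  (Matrix.traceLinearMap (Fin n) ℂ ℂ).comp (LinearMap.mulLeft ℂ (Matrix.single j i 1))

open scoped Classical in
/-- The one-form `F̄` read off the meander: the sum, over top edges `{v_i, v_j}` with `i < j`,
of `M ↦ M j i`, plus the sum, over bottom edges `{v_i, v_j}` with `i < j`, of `M ↦ M i j`. -/
def meanderForm (n : ℕ) (a b : List ℕ) : Matrix (Fin n) (Fin n) ℂ →ₗ[ℂ] ℂ :=
  ∑ i : Fin n, ∑ j : Fin n,
    ((if TopEdge a i.val j.val then entryForm j i else 0) +
      (if BottomEdge b i.val j.val then entryForm i j else 0))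

open scoped Classical in
/-- The linear functional `M ↦ M₁₁ + ⋯ + M_{i,i}` (1-based indexing), i.e. the sum of the
first `i` diagonal entries. -/
def partialTraceForm (n i : ℕ) : Matrix (Fin n) (Fin n) ℂ →ₗ[ℂ] ℂ :=
  (Matrix.traceLinearMap (Fin n) ℂ ℂ).comp
    (LinearMap.mulLeft ℂ (Matrix.diagonal fun l : Fin n => if l.val < i then (1 : ℂ) else 0))

/-- The generating set `{e_{i,1} : 2 ≤ i ≤ a} ∪ {e_{a,j} : 2 ≤ j ≤ a-1}` (1-based indexing) of
a Heisenberg subalgebra of `n × n` matrices. -/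
def heisSet (n a : ℕ) : Set (Matrix (Fin n) (Fin n) ℂ) :=
  {M | ∃ i j : Fin n, M = Matrix.single i j 1 ∧
    ((j.val = 0 ∧ 1 ≤ i.val ∧ i.val ≤ a - 1) ∨
      (i.val = a - 1 ∧ 1 ≤ j.val ∧ j.val ≤ a - 2))}


/-! ### Auxiliary lemmas -/

section Aux

open Equiv

private lemma fin1_eta {gamma : Type*} (g : Fin 1 → gamma) : g = ![g 0] :=
  funext fun i => by fin_cases i <;> rfl

private lemma fin2_eta {gamma : Type*} (g : Fin 2 → gamma) : g = ![g 0, g 1] :=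
  funext fun i => by fin_cases i <;> rfl

private lemma fin3_eta {gamma : Type*} (g : Fin 3 → gamma) : g = ![g 0, g 1, g 2] :=
  funext fun i => by fin_cases i <;> rfl

private def perm12 : Fin 6 → Equiv.Perm (Fin 1 ⊕ Fin 2) :=
  ![1, swap (.inl 0) (.inr 0), swap (.inl 0) (.inr 1), swap (.inr 0) (.inr 1),
    swap (.inl 0) (.inr 0) * swap (.inr 0) (.inr 1),
    swap (.inl 0) (.inr 1) * swap (.inr 0) (.inr 1)]

private def perm20 : Fin 2 → Equiv.Perm (Fin 2 ⊕ Fin 0) :=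
  ![1, swap (.inl 0) (.inl 1)]

private lemma sum_perm12 {M : Type*} [AddCommGroup M]
    (F : (Fin 1 ⊕ Fin 2) → (Fin 1 ⊕ Fin 2) → (Fin 1 ⊕ Fin 2) → M) :
    ∑ σ : Equiv.Perm (Fin 1 ⊕ Fin 2),
        (Equiv.Perm.sign σ : ℤ) • F (σ (.inl 0)) (σ (.inr 0)) (σ (.inr 1)) =
      F (.inl 0) (.inr 0) (.inr 1) - F (.inr 0) (.inl 0) (.inr 1)
        - F (.inr 1) (.inr 0) (.inl 0) - F (.inl 0) (.inr 1) (.inr 0)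
        + F (.inr 0) (.inr 1) (.inl 0) + F (.inr 1) (.inl 0) (.inr 0) := by
  rw [← Fintype.sum_bijective perm12 (by decide)
    (fun i => (Equiv.Perm.sign (perm12 i) : ℤ) •
      F (perm12 i (.inl 0)) (perm12 i (.inr 0)) (perm12 i (.inr 1)))
    _ (fun i => rfl), Fin.sum_univ_six]
  norm_num [show perm12 0 (.inl 0) = .inl 0 ∧ perm12 0 (.inr 0) = .inr 0 ∧
      perm12 0 (.inr 1) = .inr 1 from by decide,
    show perm12 1 (.inl 0) = .inr 0 ∧ perm12 1 (.inr 0) = .inl 0 ∧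
      perm12 1 (.inr 1) = .inr 1 from by decide,
    show perm12 2 (.inl 0) = .inr 1 ∧ perm12 2 (.inr 0) = .inr 0 ∧
      perm12 2 (.inr 1) = .inl 0 from by decide,
    show perm12 3 (.inl 0) = .inl 0 ∧ perm12 3 (.inr 0) = .inr 1 ∧
      perm12 3 (.inr 1) = .inr 0 from by decide,
    show perm12 4 (.inl 0) = .inr 0 ∧ perm12 4 (.inr 0) = .inr 1 ∧
      perm12 4 (.inr 1) = .inl 0 from by decide,
    show perm12 5 (.inl 0) = .inr 1 ∧ perm12 5 (.inr 0) = .inl 0 ∧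
      perm12 5 (.inr 1) = .inr 0 from by decide,
    show Equiv.Perm.sign (perm12 0) = 1 from by decide,
    show Equiv.Perm.sign (perm12 1) = -1 from by decide,
    show Equiv.Perm.sign (perm12 2) = -1 from by decide,
    show Equiv.Perm.sign (perm12 3) = -1 from by decide,
    show Equiv.Perm.sign (perm12 4) = 1 from by decide,
    show Equiv.Perm.sign (perm12 5) = 1 from by decide]
  abel

private lemma sum_perm20 {M : Type*} [AddCommGroup M]
    (F : (Fin 2 ⊕ Fin 0) → (Fin 2 ⊕ Fin 0) → M) :
    ∑ σ : Equiv.Perm (Fin 2 ⊕ Fin 0),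
        (Equiv.Perm.sign σ : ℤ) • F (σ (.inl 0)) (σ (.inl 1)) =
      F (.inl 0) (.inl 1) - F (.inl 1) (.inl 0) := by
  rw [← Fintype.sum_bijective perm20 (by decide)
    (fun i => (Equiv.Perm.sign (perm20 i) : ℤ) • F (perm20 i (.inl 0)) (perm20 i (.inl 1)))
    _ (fun i => rfl), Fin.sum_univ_two]
  norm_num [show perm20 0 (.inl 0) = .inl 0 ∧ perm20 0 (.inl 1) = .inl 1 from by decide,
    show perm20 1 (.inl 0) = .inl 1 ∧ perm20 1 (.inl 1) = .inl 0 from by decide,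
    show Equiv.Perm.sign (perm20 0) = 1 from by decide,
    show Equiv.Perm.sign (perm20 1) = -1 from by decide]
  abel

variable {L : Type*} [AddCommGroup L] [Module ℂ L]

private lemma two_form_swap (β : L [⋀^Fin 2]→ₗ[ℂ] ℂ) (x y : L) : β ![y, x] = -β ![x, y] := by
  have h := β.map_swap ![x, y] (show (0 : Fin 2) ≠ 1 by decide)
  rw [show (![x, y] ∘ Equiv.swap (0 : Fin 2) 1) = ![y, x] from
    funext fun i => by fin_cases i <;> rfl] at h
  exact h

private lemma wedge_one_two_apply (α : L [⋀^Fin 1]→ₗ[ℂ] ℂ) (β : L [⋀^Fin 2]→ₗ[ℂ] ℂ)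
    (v : Fin (1 + 2) → L) :
    wedge α β v =
      α ![v 0] * β ![v 1, v 2] - α ![v 1] * β ![v 0, v 2] + α ![v 2] * β ![v 0, v 1] := by
  have hw : wedge α β v =
      TensorProduct.lid ℂ ℂ ((α.domCoprod β) fun i => v (finSumFinEquiv i)) := rfl
  have key := congrArg
    (fun F : L [⋀^Fin 1 ⊕ Fin 2]→ₗ[ℂ] (ℂ ⊗[ℂ] ℂ) =>
      TensorProduct.lid ℂ ℂ (F fun i => v (finSumFinEquiv i)))
    (MultilinearMap.domCoprod_alternization_eq α β)
  simp only [MultilinearMap.alternatization_apply, MultilinearMap.domDomCongr_apply,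
    MultilinearMap.domCoprod_apply, AlternatingMap.coe_multilinearMap, Units.smul_def,
    map_sum, map_zsmul, AlternatingMap.smul_apply, map_nsmul, TensorProduct.lid_tmul,
    smul_eq_mul, Fintype.card_fin, Nat.factorial] at key
  rw [show Nat.succ 0 * 1 * (Nat.succ 1 * (Nat.succ 0 * 1)) = 2 from rfl, nsmul_eq_mul] at key
  push_cast at key
  rw [show (∑ σ : Equiv.Perm (Fin 1 ⊕ Fin 2), (Equiv.Perm.sign σ : ℤ) •
        ((α fun i => v (finSumFinEquiv (σ (Sum.inl i)))) *
          β fun i => v (finSumFinEquiv (σ (Sum.inr i))))) =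
      ∑ σ : Equiv.Perm (Fin 1 ⊕ Fin 2), (Equiv.Perm.sign σ : ℤ) •
        ((fun a b c => α ![v (finSumFinEquiv a)] *
            β ![v (finSumFinEquiv b), v (finSumFinEquiv c)])
          (σ (.inl 0)) (σ (.inr 0)) (σ (.inr 1))) from
    Finset.sum_congr rfl fun σ _ => by
      rw [fin1_eta (fun i => v (finSumFinEquiv (σ (Sum.inl i)))),
        fin2_eta (fun i => v (finSumFinEquiv (σ (Sum.inr i))))],
    sum_perm12 (fun a b c => α ![v (finSumFinEquiv a)] *
      β ![v (finSumFinEquiv b), v (finSumFinEquiv c)])] at key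
  simp only [show finSumFinEquiv (Sum.inl (0 : Fin 1)) = (0 : Fin (1 + 2)) from by decide,
    show finSumFinEquiv (Sum.inr (0 : Fin 2)) = (1 : Fin (1 + 2)) from by decide,
    show finSumFinEquiv (Sum.inr (1 : Fin 2)) = (2 : Fin (1 + 2)) from by decide] at key
  rw [two_form_swap β (v 0) (v 1), two_form_swap β (v 1) (v 2),
    two_form_swap β (v 0) (v 2)] at key
  rw [hw]
  linear_combination -key / 2

private lemma wedgePow_zero_apply (β : L [⋀^Fin 2]→ₗ[ℂ] ℂ) (g : Fin (2 * 0) → L) :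
    wedgePow β 0 g = 1 := rfl

private lemma wedgePow_one_apply (β : L [⋀^Fin 2]→ₗ[ℂ] ℂ) (x y : L) :
    wedgePow β 1 ![x, y] = β ![x, y] := by
  have hw : wedgePow β 1 ![x, y] =
      TensorProduct.lid ℂ ℂ ((β.domCoprod (wedgePow β 0))
        fun i => (![x, y] : Fin (2 * 1) → L) (finCongr (by ring) (finSumFinEquiv i))) := rfl
  have key := congrArg
    (fun F : L [⋀^Fin 2 ⊕ Fin 0]→ₗ[ℂ] (ℂ ⊗[ℂ] ℂ) =>
      TensorProduct.lid ℂ ℂ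
        (F fun i => (![x, y] : Fin (2 * 1) → L) (finCongr (by ring) (finSumFinEquiv i))))
    (MultilinearMap.domCoprod_alternization_eq β (wedgePow β 0))
  simp only [MultilinearMap.alternatization_apply, MultilinearMap.domDomCongr_apply,
    MultilinearMap.domCoprod_apply, AlternatingMap.coe_multilinearMap, Units.smul_def,
    map_sum, map_zsmul, AlternatingMap.smul_apply, map_nsmul, TensorProduct.lid_tmul,
    smul_eq_mul, Fintype.card_fin, Nat.factorial, wedgePow_zero_apply, mul_one] at key
  rw [show Nat.succ 1 * (Nat.succ 0 * 1) * 1 = 2 from rfl, nsmul_eq_mul] at key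
  push_cast at key
  rw [show (∑ σ : Equiv.Perm (Fin 2 ⊕ Fin 0), (Equiv.Perm.sign σ : ℤ) •
        (β fun i => (![x, y] : Fin (2 * 1) → L) (finCongr (by ring) (finSumFinEquiv (σ (Sum.inl i)))))) =
      ∑ σ : Equiv.Perm (Fin 2 ⊕ Fin 0), (Equiv.Perm.sign σ : ℤ) •
        ((fun a b => β ![(![x, y] : Fin (2 * 1) → L) (finCongr (by ring) (finSumFinEquiv a)),
            (![x, y] : Fin (2 * 1) → L) (finCongr (by ring) (finSumFinEquiv b))])
          (σ (.inl 0)) (σ (.inl 1))) from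
    Finset.sum_congr rfl fun σ _ => by
      rw [fin2_eta (fun i =>
        (![x, y] : Fin (2 * 1) → L) (finCongr (by ring) (finSumFinEquiv (σ (Sum.inl i)))))],
    sum_perm20 (fun a b => β ![(![x, y] : Fin (2 * 1) → L) (finCongr (by ring) (finSumFinEquiv a)),
      (![x, y] : Fin (2 * 1) → L) (finCongr (by ring) (finSumFinEquiv b))])] at key
  rw [show (![x, y] : Fin (2 * 1) → L) (finCongr (rfl : 2 + 2 * 0 = 2 * 1)
        (finSumFinEquiv (Sum.inl 0 : Fin 2 ⊕ Fin 0))) = x from rfl,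
    show (![x, y] : Fin (2 * 1) → L) (finCongr (rfl : 2 + 2 * 0 = 2 * 1)
        (finSumFinEquiv (Sum.inl 1 : Fin 2 ⊕ Fin 0))) = y from rfl,
    two_form_swap β x y] at key
  rw [hw]
  linear_combination -key / 2

end Aux

section Aux2

variable {L : Type*} [LieRing L] [LieAlgebra ℂ L]

private lemma contactCandidate_one_apply (φ : Module.Dual ℂ L) (x y z : L) :
    contactCandidate 1 φ ![x, y, z] =
      φ y * φ ⁅x, z⁆ - φ x * φ ⁅y, z⁆ - φ z * φ ⁅x, y⁆ := by
  have h := wedge_one_two_apply (AlternatingMap.ofSubsingleton ℂ L ℂ (0 : Fin 1) φ)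
    (wedgePow (dForm φ) 1) ![x, y, z]
  simp only [Matrix.cons_val_zero, Matrix.cons_val_one, Matrix.head_cons, Matrix.cons_val_two,
    Matrix.tail_cons] at h
  rw [show contactCandidate 1 φ ![x, y, z] =
      wedge (AlternatingMap.ofSubsingleton ℂ L ℂ (0 : Fin 1) φ)
        (wedgePow (dForm φ) 1) ![x, y, z] from rfl, h,
    wedgePow_one_apply, wedgePow_one_apply, wedgePow_one_apply]
  simp only [show ∀ a b : L, dForm φ ![a, b] = -φ ⁅a, b⁆ from fun a b => rfl,
    show ∀ a : L, (AlternatingMap.ofSubsingleton ℂ L ℂ (0 : Fin 1) φ) ![a] = φ a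
      from fun a => rfl]
  ring

end Aux2

/-- The 3-dimensional Lie algebra with `⁅e₁,e₂⁆ = e₂`, `⁅e₁,e₃⁆ = e₃`,
`⁅e₂,e₃⁆ = 0` has index one but is not contact. -/
theorem index_one_not_contact_example (L : Type*) [LieRing L] [LieAlgebra ℂ L]
    (E : Module.Basis (Fin 3) ℂ L)
    (h12 : ⁅E 0, E 1⁆ = E 1) (h13 : ⁅E 0, E 2⁆ = E 2) (h23 : ⁅E 1, E 2⁆ = (0 : L)) :
    lieIndex L = 1 ∧ ∀ φ : Module.Dual ℂ L, ¬ IsContactForm 1 φ := by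
  have h21 : ⁅E 1, E 0⁆ = -E 1 := by rw [← lie_skew, h12]
  have h31 : ⁅E 2, E 0⁆ = -E 2 := by rw [← lie_skew, h13]
  have h32 : ⁅E 2, E 1⁆ = (0 : L) := by rw [← lie_skew, h23, neg_zero]
  have hlie1 : ∀ y : L, ⁅E 1, y⁆ = -(E.repr y 0 • E 1) := by
    intro y
    conv_lhs => rw [← E.sum_repr y, Fin.sum_univ_three]
    simp [lie_add, lie_smul, h21, h23, lie_self]
  have hlie2 : ∀ y : L, ⁅E 2, y⁆ = -(E.repr y 0 • E 2) := by
    intro y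
    conv_lhs => rw [← E.sum_repr y, Fin.sum_univ_three]
    simp [lie_add, lie_smul, h31, h32, lie_self]
  have hlieE0 : ∀ x : L, ⁅x, E 0⁆ = -(E.repr x 1 • E 1) - E.repr x 2 • E 2 := by
    intro x
    conv_lhs => rw [← E.sum_repr x, Fin.sum_univ_three]
    simp [add_lie, smul_lie, h21, h31, lie_self, smul_neg]
    abel
  have hlieE1 : ∀ x : L, ⁅x, E 1⁆ = E.repr x 0 • E 1 := by
    intro x
    conv_lhs => rw [← E.sum_repr x, Fin.sum_univ_three]
    simp [add_lie, smul_lie, h12, h32, lie_self]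
  constructor
  · -- index computation
    have hFin : Module.Finite ℂ L := Module.Finite.of_basis E
    have hker : kirillovKernel (E.coord 1) = (ℂ ∙ E 2) := by
      apply le_antisymm
      · intro x hx
        have hx' : ∀ y : L, E.coord 1 ⁅x, y⁆ = 0 := hx
        have ha := hx' (E 1)
        have hb := hx' (E 0)
        rw [hlieE1 x] at ha
        rw [hlieE0 x] at hb
        simp [Module.Basis.coord_apply, Module.Basis.repr_self, Finsupp.single_apply] at ha hb
        rw [Submodule.mem_span_singleton]
        refine ⟨E.repr x 2, ?_⟩
        conv_rhs => rw [← E.sum_repr x, Fin.sum_univ_three]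
        rw [ha, hb]
        simp
      · rw [Submodule.span_singleton_le_iff_mem]
        show ∀ y : L, E.coord 1 ⁅E 2, y⁆ = 0
        intro y
        rw [hlie2 y]
        simp [Module.Basis.coord_apply, Module.Basis.repr_self, Finsupp.single_apply]
    have hone : Module.finrank ℂ (kirillovKernel (E.coord 1)) = 1 := by
      rw [hker]; exact finrank_span_singleton (E.ne_zero 2)
    have hmem : (1 : ℕ) ∈
        {d : ℕ | ∃ φ : Module.Dual ℂ L, d = Module.finrank ℂ (kirillovKernel φ)} :=
      ⟨E.coord 1, hone.symm⟩
    have hpos : ∀ ψ : Module.Dual ℂ L, 0 < Module.finrank ℂ (kirillovKernel ψ) := by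
      intro ψ
      rw [Module.finrank_pos_iff]
      by_cases hb : ψ (E 1) = 0
      · by_cases hc : ψ (E 2) = 0
        · have hm : E 1 ∈ kirillovKernel ψ := by
            show ∀ y : L, ψ ⁅E 1, y⁆ = 0
            intro y
            rw [hlie1 y]
            simp [hb]
          refine nontrivial_of_ne ⟨E 1, hm⟩ 0 ?_
          simp only [ne_eq, Submodule.mk_eq_zero]
          exact E.ne_zero 1
        · have hm : ψ (E 2) • E 1 - ψ (E 1) • E 2 ∈ kirillovKernel ψ := by
            show ∀ y : L, ψ ⁅ψ (E 2) • E 1 - ψ (E 1) • E 2, y⁆ = 0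
            intro y
            rw [sub_lie, smul_lie, smul_lie, hlie1 y, hlie2 y]
            simp only [map_sub, map_smul, map_neg, smul_eq_mul]
            ring
          refine nontrivial_of_ne ⟨_, hm⟩ 0 ?_
          simp only [ne_eq, Submodule.mk_eq_zero]
          intro hzero
          apply hc
          have h' := congrArg (E.coord 1) hzero
          simpa [Module.Basis.coord_apply, Module.Basis.repr_self, Finsupp.single_apply] using h'
      · have hm : ψ (E 2) • E 1 - ψ (E 1) • E 2 ∈ kirillovKernel ψ := by
          show ∀ y : L, ψ ⁅ψ (E 2) • E 1 - ψ (E 1) • E 2, y⁆ = 0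
          intro y
          rw [sub_lie, smul_lie, smul_lie, hlie1 y, hlie2 y]
          simp only [map_sub, map_smul, map_neg, smul_eq_mul]
          ring
        refine nontrivial_of_ne ⟨_, hm⟩ 0 ?_
        simp only [ne_eq, Submodule.mk_eq_zero]
        intro hzero
        apply hb
        have h' := congrArg (E.coord 2) hzero
        simpa [Module.Basis.coord_apply, Module.Basis.repr_self, Finsupp.single_apply] using h'
    unfold lieIndex
    refine le_antisymm (Nat.sInf_le hmem) ?_
    obtain ⟨ψ, hψ⟩ := Nat.sInf_mem
      (⟨1, hmem⟩ : Set.Nonempty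
        {d : ℕ | ∃ φ : Module.Dual ℂ L, d = Module.finrank ℂ (kirillovKernel φ)})
    have := hpos ψ
    omega
  · intro φ hφ
    apply hφ
    apply Module.Basis.ext_alternating E
    intro w hw
    simp only [AlternatingMap.zero_apply]
    rw [show (fun i => E (w i)) = ![E (w 0), E (w 1), E (w 2)] from fin3_eta _]
    rw [contactCandidate_one_apply]
    generalize w 0 = i
    generalize w 1 = j
    generalize w 2 = k
    fin_cases i <;> fin_cases j <;> fin_cases k <;>
      simp [h12, h13, h23, h21, h31, h32, lie_self] <;> ring

end ContactSeaweeds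
end
end

section
/- Let g = p_n^A(a_1|…|a_m \ b_1|…|b_t) be a type-A seaweed with n > 2 whose meander M(g) consists of exactly one cycle (M(g) is connected and every vertex lies on exactly one top edge and exactly one bottom edge). Then at least one of a_1, a_m, b_1, b_t is greater than or equal to 4. -/
open scoped TensorProduct

noncomputable section

namespace ContactSeaweeds

attribute [local instance 100] LieRing.ofAssociativeRing

lemma bottomEdge_iff_topEdge {c : List ℕ} {i j : ℕ} : BottomEdge c i j ↔ TopEdge c i j :=
  Iff.rfl

lemma topEdge_zero {x : ℕ} {t : List ℕ} (hx : 0 < x) {w : ℕ}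
    (h : TopEdge (x :: t) 0 w ∨ TopEdge (x :: t) w 0) : 2 ≤ x ∧ w = x - 1 := by
  rcases h with ⟨k, r, h1, h2, h3⟩ | ⟨k, r, h1, h2, h3⟩ <;>
    cases k with
    | zero => simp only [List.getD_cons_zero, List.take_zero, List.sum_nil, zero_add]
        at h1 h2 h3; omega
    | succ k => simp only [List.getD_cons_succ, List.take_succ_cons, List.sum_cons]
        at h1 h2 h3; omega

lemma topEdge_one_of_two {t : List ℕ} {w : ℕ}
    (h : TopEdge (2 :: t) 1 w ∨ TopEdge (2 :: t) w 1) : w = 0 := by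
  rcases h with ⟨k, r, h1, h2, h3⟩ | ⟨k, r, h1, h2, h3⟩ <;>
    cases k with
    | zero => simp only [List.getD_cons_zero, List.take_zero, List.sum_nil, zero_add]
        at h1 h2 h3; omega
    | succ k => simp only [List.getD_cons_succ, List.take_succ_cons, List.sum_cons]
        at h1 h2 h3; omega

lemma no_topEdge_one_of_three {t : List ℕ} {w : ℕ} :
    ¬ (TopEdge (3 :: t) 1 w ∨ TopEdge (3 :: t) w 1) := by
  rintro (⟨k, r, h1, h2, h3⟩ | ⟨k, r, h1, h2, h3⟩) <;>
    cases k with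
    | zero => simp only [List.getD_cons_zero, List.take_zero, List.sum_nil, zero_add]
        at h1 h2 h3; omega
    | succ k => simp only [List.getD_cons_succ, List.take_succ_cons, List.sum_cons]
        at h1 h2 h3; omega

/-- If `n > 2` and the meander of a type-A seaweed is exactly one cycle,
then one of the extreme parts `a₁, aₘ, b₁, b_t` is at least `4`. -/
theorem extreme_part_ge_four_of_single_cycle (n : ℕ) (hn : 2 < n) (a b : List ℕ)
    (ha : IsComposition n a) (hb : IsComposition n b)
    (hconn : (meander n a b).Connected)
    (hdeg : ∀ v : Fin n, OneTop a v.val ∧ OneBottom b v.val) :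
    4 ≤ a.headI ∨ 4 ≤ a.getLastD 0 ∨ 4 ≤ b.headI ∨ 4 ≤ b.getLastD 0 := by
  by_contra hcon
  push_neg at hcon
  obtain ⟨hA, _, hB, _⟩ := hcon
  obtain ⟨hapos, hasum⟩ := ha
  obtain ⟨hbpos, hbsum⟩ := hb
  cases a with
  | nil => simp at hasum; omega
  | cons x ta =>
  cases b with
  | nil => simp at hbsum; omega
  | cons y tb =>
  simp only [List.headI_cons] at hA hB
  have hxpos : 0 < x := hapos x (by simp)
  have hypos : 0 < y := hbpos y (by simp)
  -- vertex 0 forces the first parts to be at least 2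
  have h0 := hdeg ⟨0, by omega⟩
  obtain ⟨w0, hw0, _⟩ := h0.1
  obtain ⟨w0', hw0', _⟩ := h0.2
  have hx2 : 2 ≤ x := (topEdge_zero hxpos hw0).1
  have hy2 : 2 ≤ y := (topEdge_zero hypos
    (hw0'.imp bottomEdge_iff_topEdge.mp bottomEdge_iff_topEdge.mp)).1
  -- vertex 1 rules out 3
  have h1 := hdeg ⟨1, by omega⟩
  have hx3 : x ≠ 3 := by
    rintro rfl
    obtain ⟨w1, hw1, _⟩ := h1.1
    exact no_topEdge_one_of_three hw1
  have hy3 : y ≠ 3 := by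
    rintro rfl
    obtain ⟨w1, hw1, _⟩ := h1.2
    exact no_topEdge_one_of_three
      (hw1.imp bottomEdge_iff_topEdge.mp bottomEdge_iff_topEdge.mp)
  have hx : x = 2 := by omega
  have hy : y = 2 := by omega
  subst hx; subst hy
  -- the component of vertex 0 is {0, 1}
  have hclo : ∀ u v : Fin n, (meander n (2 :: ta) (2 :: tb)).Adj u v →
      u.val < 2 → v.val < 2 := by
    rintro u v ⟨hne, hadj⟩ hu
    have hu01 : u.val = 0 ∨ u.val = 1 := by omega
    rcases hu01 with hu0 | hu1
    · rcases hadj with h | h | h | h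
      · rw [hu0] at h
        have := (topEdge_zero (by norm_num) (Or.inl h)).2; omega
      · rw [hu0] at h
        have := (topEdge_zero (by norm_num) (Or.inr h)).2; omega
      · rw [hu0] at h
        have := (topEdge_zero (x := 2) (t := tb) (by norm_num)
          (Or.inl (bottomEdge_iff_topEdge.mp h))).2; omega
      · rw [hu0] at h
        have := (topEdge_zero (x := 2) (t := tb) (by norm_num)
          (Or.inr (bottomEdge_iff_topEdge.mp h))).2; omega
    · rcases hadj with h | h | h | h
      · rw [hu1] at h
        have := topEdge_one_of_two (Or.inl h); omega
      · rw [hu1] at h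
        have := topEdge_one_of_two (Or.inr h); omega
      · rw [hu1] at h
        have := topEdge_one_of_two (t := tb) (Or.inl (bottomEdge_iff_topEdge.mp h)); omega
      · rw [hu1] at h
        have := topEdge_one_of_two (t := tb) (Or.inr (bottomEdge_iff_topEdge.mp h)); omega
  have hwalk : ∀ (u v : Fin n) (p : (meander n (2 :: ta) (2 :: tb)).Walk u v),
      u.val < 2 → v.val < 2 := by
    intro u v p
    induction p with
    | nil => exact id
    | cons h p ih => intro hu; exact ih (hclo _ _ h hu)
  obtain ⟨p⟩ := hconn.preconnected ⟨0, by omega⟩ ⟨2, hn⟩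
  have := hwalk _ _ p (by simp)
  simp at this

end ContactSeaweeds
end
end
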